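/- Bonnet's Theorem (univariate): If θ ~ N(μ, σ²) and f : ℝ → ℝ is differentiable with suitable integrability, then the derivative with respect to μ of E[f(θ)] equals E[f'(θ)]. -/

import Mathlib

open MeasureTheory Real

/-- Univariate Gaussian density of `N(μ, σ²)`. -/
noncomputable def gaussPDF (μ σ : ℝ) (θ : ℝ) : ℝ :=
  (2 * Real.pi * σ ^ 2) ^ (-(1 : ℝ) / 2) * Real.exp (-(θ - μ) ^ 2 / (2 * σ ^ 2))

lemma pow_le_factorial_mul_exp (n : ℕ) {t : ℝ} (ht : 0 ≤ t) :
    t ^ n ≤ (n.factorial : ℝ) * Real.exp t := by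
  have h1 : t ^ n / (n.factorial : ℝ) ≤ Real.exp t := by
    refine le_trans ?_ (Real.sum_le_exp_of_nonneg ht (n + 1))
    exact Finset.single_le_sum (f := fun i => t ^ i / (i.factorial : ℝ))
      (fun i _ => by positivity) (Finset.self_mem_range_succ n)
  have hfac : (0:ℝ) < (n.factorial : ℝ) := by positivity
  calc t ^ n = (t ^ n / (n.factorial : ℝ)) * (n.factorial : ℝ) := by field_simp
    _ ≤ Real.exp t * (n.factorial : ℝ) := by
        exact mul_le_mul_of_nonneg_right h1 hfac.le
    _ = (n.factorial : ℝ) * Real.exp t := by ring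

lemma integrable_poly_gauss {b : ℝ} (hb : 0 < b) (n : ℕ) :
    Integrable (fun y : ℝ => (1 + |y|) ^ n * Real.exp (-b * y ^ 2)) := by
  have hint := (integrable_exp_neg_mul_sq (half_pos hb)).const_mul
    (2 ^ n * (2 / b) ^ n * (n.factorial : ℝ) * Real.exp (b / 2))
  refine hint.mono' ?_ ?_
  · exact (((continuous_const.add continuous_abs).pow n).mul
      (Real.continuous_exp.comp (by continuity))).aestronglyMeasurable
  · filter_upwards with y
    have hnn : (0:ℝ) ≤ (1 + |y|) ^ n * Real.exp (-b * y ^ 2) := by positivity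
    rw [Real.norm_eq_abs, abs_of_nonneg hnn]
    have h1 : (1 + |y|) ≤ 2 * (1 + y ^ 2) := by
      nlinarith [sq_abs y, sq_nonneg (|y| - 1), abs_nonneg y]
    have h2 : (1 + |y|) ^ n ≤ (2 * (1 + y ^ 2)) ^ n :=
      pow_le_pow_left₀ (by positivity) h1 n
    have h3 : (b / 2 * (1 + y ^ 2)) ^ n ≤ (n.factorial : ℝ) *
        Real.exp (b / 2 * (1 + y ^ 2)) :=
      pow_le_factorial_mul_exp n (by positivity)
    have h4 : (1 + y ^ 2) ^ n ≤ (2 / b) ^ n * ((n.factorial : ℝ) *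
        Real.exp (b / 2 * (1 + y ^ 2))) := by
      have : (1 + y ^ 2) ^ n = (2 / b) ^ n * (b / 2 * (1 + y ^ 2)) ^ n := by
        rw [← mul_pow]
        congr 1
        field_simp
      rw [this]
      exact mul_le_mul_of_nonneg_left h3 (by positivity)
    have hexp : Real.exp (b / 2 * (1 + y ^ 2)) * Real.exp (-b * y ^ 2)
        = Real.exp (b / 2) * Real.exp (-(b / 2) * y ^ 2) := by
      rw [← Real.exp_add, ← Real.exp_add]
      congr 1
      ring
    calc (1 + |y|) ^ n * Real.exp (-b * y ^ 2)
        ≤ (2 * (1 + y ^ 2)) ^ n * Real.exp (-b * y ^ 2) :=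
          mul_le_mul_of_nonneg_right h2 (Real.exp_pos _).le
      _ = 2 ^ n * (1 + y ^ 2) ^ n * Real.exp (-b * y ^ 2) := by rw [mul_pow]
      _ ≤ 2 ^ n * ((2 / b) ^ n * ((n.factorial : ℝ) *
            Real.exp (b / 2 * (1 + y ^ 2)))) * Real.exp (-b * y ^ 2) := by
          refine mul_le_mul_of_nonneg_right ?_ (Real.exp_pos _).le
          exact mul_le_mul_of_nonneg_left h4 (by positivity)
      _ = 2 ^ n * (2 / b) ^ n * (n.factorial : ℝ) *
            (Real.exp (b / 2 * (1 + y ^ 2)) * Real.exp (-b * y ^ 2)) := by ring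
      _ = 2 ^ n * (2 / b) ^ n * (n.factorial : ℝ) * Real.exp (b / 2) *
            Real.exp (-(b / 2) * y ^ 2) := by rw [hexp]; ring

/-- Bonnet's Theorem (univariate): for `θ ~ N(μ, σ²)` and differentiable `f` with `f, f'`
of at most polynomial growth, `∂/∂μ E[f(θ)] = E[f'(θ)]`. -/
theorem bonnet_univariate (μ σ : ℝ) (hσ : 0 < σ) (f f' : ℝ → ℝ)
    (hderiv : ∀ x, HasDerivAt f (f' x) x)
    (hfpoly : ∃ c n, ∀ x : ℝ, |f x| ≤ c * (1 + |x|) ^ n)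
    (hf'poly : ∃ c n, ∀ x : ℝ, |f' x| ≤ c * (1 + |x|) ^ n) :
    HasDerivAt (fun m : ℝ => ∫ θ : ℝ, gaussPDF m σ θ * f θ)
      (∫ θ : ℝ, gaussPDF μ σ θ * f' θ) μ := by
  obtain ⟨c, n, hf⟩ := hfpoly
  obtain ⟨c', n', hf'⟩ := hf'poly
  have hb : (0:ℝ) < 1 / (2 * σ ^ 2) := by positivity
  have hgauss_eq : ∀ y : ℝ, gaussPDF 0 σ y
      = (2 * Real.pi * σ ^ 2) ^ (-(1:ℝ) / 2) * Real.exp (-(1 / (2 * σ ^ 2)) * y ^ 2) := by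
    intro y
    unfold gaussPDF
    congr 2
    ring
  have hgauss_nonneg : ∀ y, 0 ≤ gaussPDF 0 σ y := by
    intro y
    rw [hgauss_eq]
    have : (0:ℝ) < 2 * Real.pi * σ ^ 2 := by positivity
    positivity
  have hcont_gauss : Continuous (gaussPDF 0 σ) := by
    unfold gaussPDF
    exact continuous_const.mul (Real.continuous_exp.comp (by continuity))
  have hcont_f : Continuous f :=
    continuous_iff_continuousAt.2 fun x => (hderiv x).continuousAt
  have hmeas_f' : Measurable f' := by
    have hfd : f' = deriv f := funext fun x => ((hderiv x).deriv).symm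
    rw [hfd]
    exact measurable_deriv f
  have hc : 0 ≤ c := by
    have := hf 0
    simp at this
    exact le_trans (abs_nonneg _) this
  have hc' : 0 ≤ c' := by
    have := hf' 0
    simp at this
    exact le_trans (abs_nonneg _) this
  -- integrability of gaussian times polynomial
  have hint : ∀ (C : ℝ) (k : ℕ),
      Integrable (fun y : ℝ => gaussPDF 0 σ y * (C * (1 + |y|) ^ k)) := by
    intro C k
    have h := (integrable_poly_gauss hb k).const_mul
      ((2 * Real.pi * σ ^ 2) ^ (-(1:ℝ) / 2) * C)
    refine h.congr ?_
    filter_upwards with y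
    rw [hgauss_eq]
    ring
  -- translation inequality
  have habs : ∀ (y x : ℝ), |x - μ| ≤ 1 → (1 + |y + x|) ≤ (2 + |μ|) * (1 + |y|) := by
    intro y x hx
    have h1 : |y + x| ≤ |y| + |x| := abs_add_le _ _
    have h2 : |x| ≤ |x - μ| + |μ| := by
      calc |x| = |(x - μ) + μ| := by ring_nf
        _ ≤ |x - μ| + |μ| := abs_add_le _ _
    nlinarith [abs_nonneg y, abs_nonneg μ]
  -- change of variables
  have key : ∀ (g : ℝ → ℝ) (m : ℝ),
      ∫ θ : ℝ, gaussPDF m σ θ * g θ = ∫ y : ℝ, gaussPDF 0 σ y * g (y + m) := by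
    intro g m
    rw [← integral_add_right_eq_self (fun θ : ℝ => gaussPDF m σ θ * g θ) m]
    refine integral_congr_ae (Filter.Eventually.of_forall fun y => ?_)
    simp only [gaussPDF, add_sub_cancel_right, sub_zero]
  simp_rw [key f, key f']
  have main := hasDerivAt_integral_of_dominated_loc_of_deriv_le
    (F := fun (m : ℝ) (y : ℝ) => gaussPDF 0 σ y * f (y + m))
    (F' := fun (m : ℝ) (y : ℝ) => gaussPDF 0 σ y * f' (y + m))
    (x₀ := μ) (μ := (volume : Measure ℝ))
    (bound := fun y : ℝ => gaussPDF 0 σ y * ((c' * (2 + |μ|) ^ n') * (1 + |y|) ^ n'))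
    (s := Metric.ball μ 1) (Metric.ball_mem_nhds μ one_pos)
    (Filter.Eventually.of_forall fun x =>
      (hcont_gauss.mul (hcont_f.comp (continuous_id.add continuous_const))).aestronglyMeasurable)
    ?_ ?_ ?_ ?_ ?_
  · exact main.2
  · -- integrability of F μ
    refine (hint (c * (2 + |μ|) ^ n) n).mono'
      ((hcont_gauss.mul (hcont_f.comp (continuous_id.add continuous_const))).aestronglyMeasurable)
      ?_
    filter_upwards with y
    rw [Real.norm_eq_abs, abs_mul, abs_of_nonneg (hgauss_nonneg y)]
    have h1 : |f (y + μ)| ≤ c * ((2 + |μ|) * (1 + |y|)) ^ n := by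
      refine le_trans (hf (y + μ)) ?_
      refine mul_le_mul_of_nonneg_left ?_ hc
      exact pow_le_pow_left₀ (by positivity) (habs y μ (by simp)) n
    calc gaussPDF 0 σ y * |f (y + μ)|
        ≤ gaussPDF 0 σ y * (c * ((2 + |μ|) * (1 + |y|)) ^ n) :=
          mul_le_mul_of_nonneg_left h1 (hgauss_nonneg y)
      _ = gaussPDF 0 σ y * (c * (2 + |μ|) ^ n * (1 + |y|) ^ n) := by rw [mul_pow]; ring
  · -- measurability of F' μ
    exact ((hcont_gauss.measurable.mul
      (hmeas_f'.comp (measurable_id.add_const μ))).aestronglyMeasurable)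
  · -- bound
    filter_upwards with y
    intro x hx
    have hx1 : |x - μ| ≤ 1 := le_of_lt (by simpa [Real.dist_eq] using hx)
    rw [Real.norm_eq_abs, abs_mul, abs_of_nonneg (hgauss_nonneg y)]
    have h1 : |f' (y + x)| ≤ c' * ((2 + |μ|) * (1 + |y|)) ^ n' := by
      refine le_trans (hf' (y + x)) ?_
      refine mul_le_mul_of_nonneg_left ?_ hc'
      exact pow_le_pow_left₀ (by positivity) (habs y x hx1) n'
    calc gaussPDF 0 σ y * |f' (y + x)|
        ≤ gaussPDF 0 σ y * (c' * ((2 + |μ|) * (1 + |y|)) ^ n') :=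
          mul_le_mul_of_nonneg_left h1 (hgauss_nonneg y)
      _ = gaussPDF 0 σ y * (c' * (2 + |μ|) ^ n' * (1 + |y|) ^ n') := by rw [mul_pow]; ring
  · -- integrability of bound
    exact hint (c' * (2 + |μ|) ^ n') n'
  · -- differentiability
    filter_upwards with y
    intro x hx
    have h := ((hderiv (y + x)).comp x ((hasDerivAt_id x).const_add y)).const_mul
      (gaussPDF 0 σ y)
    simpa using h
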